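/- Let G be a graph, X ⊆ V(G), and let C* be a connected component of G − X. Let Ĝ = G − V(C*), let Ŷ be a feedback vertex set of Ĝ, let Y* be a feedback vertex set of C*, and set X₀ = X \ Ŷ. If Y* contains every vertex of C* with at least two neighbors in X₀ and separates the set of vertices of C* with exactly one neighbor in X₀ (i.e., each component of C* − Y* contains at most one such vertex), then Ŷ ∪ Y* is a feedback vertex set of G. -/

import Mathlib

/-- `X` is a feedback vertex set of `G`: removing `X` leaves an acyclic graph. -/
def IsFVS {V : Type} (G : SimpleGraph V) (X : Set V) : Prop :=
  (G.induce Xᶜ).IsAcyclic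

/-- `X` is a minimum feedback vertex set of `G`. -/
def IsMinFVS {V : Type} (G : SimpleGraph V) (X : Set V) : Prop :=
  IsFVS G X ∧ ∀ Y : Set V, IsFVS G Y → X.ncard ≤ Y.ncard

/-- Every connected component of `G[A]` contains at most one vertex of `T`. -/
def SeparatedIn {V : Type} (G : SimpleGraph V) (A T : Set V) : Prop :=
  ∀ (t₁ t₂ : V) (h₁ : t₁ ∈ A) (h₂ : t₂ ∈ A), t₁ ∈ T → t₂ ∈ T →
    (G.induce A).Reachable ⟨t₁, h₁⟩ ⟨t₂, h₂⟩ → t₁ = t₂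

/-- `X` misses some vertex of `S`, or leaves two vertices of `T` connected in `G - X`. -/
def BadFor {V : Type} (G : SimpleGraph V) (S T X : Set V) : Prop :=
  (¬ S ⊆ X) ∨ ¬ SeparatedIn G Xᶜ T
/-- The vertices of a component (given by its vertex set `CV`) with at least two
neighbors in `X`. -/
def SVerts {V : Type} (G : SimpleGraph V) (CV X : Set V) : Set V :=
  {v ∈ CV | 2 ≤ (G.neighborSet v ∩ X).ncard}

/-- The vertices of a component (given by its vertex set `CV`) with exactly one
neighbor in `X`. -/
def TVerts {V : Type} (G : SimpleGraph V) (CV X : Set V) : Set V :=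
  {v ∈ CV | (G.neighborSet v ∩ X).ncard = 1}

open SimpleGraph

/-- A walk in `G` whose support lies in `t` can be lifted to a walk in `G.induce t`. -/
lemma unInduce {V : Type} {G : SimpleGraph V} {t : Set V} {a b : V} (p : G.Walk a b) :
    ∀ (_ : ∀ w ∈ p.support, w ∈ t) (ha : a ∈ t) (hb : b ∈ t),
    ∃ q : (G.induce t).Walk ⟨a, ha⟩ ⟨b, hb⟩,
      q.map (SimpleGraph.Embedding.induce t).toHom = p := by
  induction p with
  | nil =>
    intro _ ha hb
    exact ⟨SimpleGraph.Walk.nil, rfl⟩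
  | @cons a m b had p' ih =>
    intro h ha hb
    have hm : m ∈ t := h m (by simp)
    obtain ⟨q, hq⟩ := ih (fun w hw => h w (by simp [hw])) hm hb
    refine ⟨SimpleGraph.Walk.cons (show (G.induce t).Adj ⟨a, ha⟩ ⟨m, hm⟩ from had) q, ?_⟩
    simp [Walk.map_cons, hq]

lemma unInduceCycle {V : Type} {G : SimpleGraph V} {t : Set V} {a : V} (p : G.Walk a a)
    (hp : p.IsCycle) (h : ∀ w ∈ p.support, w ∈ t) (ha : a ∈ t) :
    ¬ (G.induce t).IsAcyclic := by
  obtain ⟨q, hq⟩ := unInduce p h ha ha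
  intro hac
  have hinj : Function.Injective ⇑(SimpleGraph.Embedding.induce t (G := G)).toHom :=
    Subtype.val_injective
  exact hac q ((SimpleGraph.Walk.map_isCycle_iff_of_injective hinj).mp
    (by rw [hq]; exact hp))

lemma mem_support_rotate_iff {V : Type} [DecidableEq V] {G : SimpleGraph V} {v u w : V} (c : G.Walk v v)
    (h : u ∈ c.support) : w ∈ (c.rotate u h).support ↔ w ∈ c.support := by
  unfold SimpleGraph.Walk.rotate
  rw [SimpleGraph.Walk.mem_support_append_iff]
  constructor
  · rintro (h1 | h1)
    · exact SimpleGraph.Walk.support_dropUntil_subset _ _ h1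
    · exact SimpleGraph.Walk.support_takeUntil_subset _ _ h1
  · intro h1
    rw [← SimpleGraph.Walk.take_spec c h, SimpleGraph.Walk.mem_support_append_iff] at h1
    exact h1.symm

lemma cross_dart {V : Type} {G : SimpleGraph V} {CV : Set V} :
    ∀ {u b : V} (p : G.Walk u b), u ∈ CV → b ∉ CV →
    ∃ d ∈ p.darts, d.fst ∈ CV ∧ d.snd ∉ CV := by
  intro u b p
  induction p with
  | nil => intro hu hb; exact absurd hu hb
  | @cons u m b had p' ih =>
    intro hu hb
    by_cases hm : m ∈ CV
    · obtain ⟨d, hd, h1, h2⟩ := ih hm hb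
      exact ⟨d, by simp [SimpleGraph.Walk.darts_cons, hd], h1, h2⟩
    · exact ⟨⟨(u, m), had⟩, by simp [SimpleGraph.Walk.darts_cons], hu, hm⟩

lemma crossing_claim {V : Type} {G : SimpleGraph V} {s CV A : Set V}
    (hA : ∀ w, w ∈ s → w ∈ CV → w ∈ A) :
    ∀ {u b : V} (p : G.Walk u b), (∀ w ∈ p.support, w ∈ s) → u ∈ CV → b ∉ CV →
    ∃ w x : V, w ∈ s ∧ w ∈ CV ∧ x ∈ s ∧ x ∉ CV ∧ G.Adj w x ∧
      (∀ (h1 : u ∈ A) (h2 : w ∈ A), (G.induce A).Reachable ⟨u, h1⟩ ⟨w, h2⟩) ∧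
      ((w = u ∧ x = p.getVert 1) ∨ w ∈ p.support.tail) := by
  intro u b p
  induction p with
  | nil => intro _ hu hb; exact absurd hu hb
  | @cons u m b had p' ih =>
    intro hs hu hb
    by_cases hm : m ∈ CV
    · obtain ⟨w, x, h1, h2, h3, h4, h5, h6, h7⟩ :=
        ih (fun w hw => hs w (by simp [hw])) hm hb
      refine ⟨w, x, h1, h2, h3, h4, h5, ?_, ?_⟩
      · intro hA1 hA2
        have hms : m ∈ s := hs m (by simp)
        have hmA : m ∈ A := hA m hms hm
        have hadj : (G.induce A).Adj ⟨u, hA1⟩ ⟨m, hmA⟩ := by exact had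
        exact hadj.reachable.trans (h6 hmA hA2)
      · right
        rw [SimpleGraph.Walk.support_cons, List.tail_cons]
        rcases h7 with ⟨rfl, _⟩ | h7
        · exact SimpleGraph.Walk.start_mem_support p'
        · exact List.mem_of_mem_tail h7
    · refine ⟨u, m, hs u (by simp), hu, hs m (by simp), hm, had, ?_,
        Or.inl ⟨rfl, ((SimpleGraph.Walk.getVert_cons_succ (n := 0) p' had).trans p'.getVert_zero).symm⟩⟩
      intro h1 h2
      exact SimpleGraph.Reachable.refl _

theorem stmt6 (V : Type) [Fintype V] (G : SimpleGraph V) (X : Set V)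
    (C : (G.induce Xᶜ).ConnectedComponent)
    (Yhat Ystar : Set V)
    (hYhat_sub : Yhat ⊆ (Subtype.val '' C.supp)ᶜ)
    (hYhat : (G.induce ((Subtype.val '' C.supp)ᶜ \ Yhat)).IsAcyclic)
    (hYstar_sub : Ystar ⊆ Subtype.val '' C.supp)
    (hYstar : (G.induce (Subtype.val '' C.supp \ Ystar)).IsAcyclic)
    (hS : SVerts G (Subtype.val '' C.supp) (X \ Yhat) ⊆ Ystar)
    (hT : SeparatedIn G (Subtype.val '' C.supp \ Ystar)
      (TVerts G (Subtype.val '' C.supp) (X \ Yhat))) :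
    IsFVS G (Yhat ∪ Ystar) := by
  classical
  set CV : Set V := Subtype.val '' C.supp with hCVdef
  intro v c hc
  have hsY : ∀ w : V, w ∈ ((Yhat ∪ Ystar)ᶜ : Set V) → w ∉ Yhat ∧ w ∉ Ystar := by
    intro w hw
    simp only [Set.mem_compl_iff, Set.mem_union, not_or] at hw
    exact hw
  have factX : ∀ a z : V, a ∈ CV → z ∉ CV → G.Adj a z → z ∈ X := by
    intro a z haCV hzCV hadj
    by_contra hzX
    obtain ⟨ac, hac, rfl⟩ := haCV
    have hadj' : (G.induce Xᶜ).Adj ⟨z, hzX⟩ ac := by exact hadj.symm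
    apply hzCV
    refine ⟨⟨z, hzX⟩, ?_, rfl⟩
    rw [SimpleGraph.ConnectedComponent.mem_supp_iff] at hac ⊢
    rw [← hac]
    exact SimpleGraph.ConnectedComponent.connectedComponentMk_eq_of_adj hadj'
  have factT : ∀ a z : V, a ∈ ((Yhat ∪ Ystar)ᶜ : Set V) → a ∈ CV → z ∉ CV → z ∉ Yhat →
      G.Adj a z → a ∈ TVerts G CV (X \ Yhat) := by
    intro a z has haCV hzCV hzY hadj
    have hzX : z ∈ X \ Yhat := ⟨factX a z haCV hzCV hadj, hzY⟩
    have h1 : 1 ≤ (G.neighborSet a ∩ (X \ Yhat)).ncard := by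
      have hne : (G.neighborSet a ∩ (X \ Yhat)).Nonempty := ⟨z, hadj, hzX⟩
      exact (Set.ncard_pos (Set.toFinite _)).mpr hne
    have h2 : ¬ 2 ≤ (G.neighborSet a ∩ (X \ Yhat)).ncard := by
      intro h2
      exact (hsY a has).2 (hS ⟨haCV, h2⟩)
    exact ⟨haCV, by omega⟩
  -- map the cycle into `G`
  have hinj : Function.Injective
      ⇑(SimpleGraph.Embedding.induce ((Yhat ∪ Ystar)ᶜ : Set V) (G := G)).toHom :=
    Subtype.val_injective
  set cG : G.Walk v.val v.val :=
    c.map (SimpleGraph.Embedding.induce ((Yhat ∪ Ystar)ᶜ : Set V)).toHom with hcGdef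
  have hcG : cG.IsCycle := (SimpleGraph.Walk.map_isCycle_iff_of_injective hinj).mpr hc
  have hsG : ∀ w ∈ cG.support, w ∈ ((Yhat ∪ Ystar)ᶜ : Set V) := by
    intro w hw
    rw [hcGdef] at hw
    replace hw : w ∈ c.support.map (SimpleGraph.Embedding.induce ((Yhat ∪ Ystar)ᶜ : Set V) (G := G)).toHom := by
      rw [← SimpleGraph.Walk.support_map]; exact hw
    obtain ⟨y, _, rfl⟩ := List.mem_map.mp hw
    exact y.2
  by_cases hall : ∀ w ∈ cG.support, w ∈ CV
  · exact unInduceCycle (t := CV \ Ystar) cG hcG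
      (fun w hw => ⟨hall w hw, (hsY w (hsG w hw)).2⟩)
      ⟨hall _ cG.start_mem_support, (hsY _ (hsG _ cG.start_mem_support)).2⟩ hYstar
  by_cases hnone : ∀ w ∈ cG.support, w ∉ CV
  · exact unInduceCycle (t := CVᶜ \ Yhat) cG hcG
      (fun w hw => ⟨hnone w hw, (hsY w (hsG w hw)).1⟩)
      ⟨hnone _ cG.start_mem_support, (hsY _ (hsG _ cG.start_mem_support)).1⟩ hYhat
  push_neg at hall hnone
  obtain ⟨b, hb_mem, hb⟩ := hall
  obtain ⟨a, ha_mem, ha⟩ := hnone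
  -- rotate the cycle to start at `a ∈ CV`
  set c₁ : G.Walk a a := cG.rotate a ha_mem with hc₁def
  have hc₁ : c₁.IsCycle := hcG.rotate _
  have hmem₁ : ∀ w, w ∈ c₁.support ↔ w ∈ cG.support := fun w =>
    mem_support_rotate_iff cG ha_mem
  have hb₁ : b ∈ c₁.support := (hmem₁ b).mpr hb_mem
  obtain ⟨d, hd, hdfst, hdsnd⟩ := cross_dart (c₁.takeUntil b hb₁) ha hb
  have hd₁ : d ∈ c₁.darts := SimpleGraph.Walk.darts_takeUntil_subset _ hb₁ hd
  have hv₀mem : d.fst ∈ c₁.support := SimpleGraph.Walk.dart_fst_mem_support_of_mem_darts _ hd₁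
  set v₀ : V := d.fst with hv₀def
  set c₂ : G.Walk v₀ v₀ := c₁.rotate v₀ hv₀mem with hc₂def
  have hc₂ : c₂.IsCycle := hc₁.rotate _
  have hd₂ : d ∈ c₂.darts := (SimpleGraph.Walk.rotate_darts c₁ v₀ hv₀mem).mem_iff.mpr hd₁
  have hmem₂ : ∀ w, w ∈ c₂.support ↔ w ∈ c₁.support := fun w =>
    mem_support_rotate_iff c₁ hv₀mem
  have hs₂ : ∀ w ∈ c₂.support, w ∈ ((Yhat ∪ Ystar)ᶜ : Set V) := fun w hw =>
    hsG w ((hmem₁ w).mp ((hmem₂ w).mp hw))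
  have hnil : ¬ c₂.Nil := hc₂.not_nil
  have hxadj : G.Adj v₀ (c₂.getVert 1) := c₂.adj_snd hnil
  set x : V := c₂.getVert 1 with hxdef
  set q : G.Walk x v₀ := c₂.tail with hqdef
  have hcons : SimpleGraph.Walk.cons hxadj q = c₂ := SimpleGraph.Walk.cons_tail_eq c₂ hnil
  have hsup₂ : c₂.support = v₀ :: q.support := by
    conv_lhs => rw [← hcons]
    rw [SimpleGraph.Walk.support_cons]
  have hqnd : q.support.Nodup := by
    have h := hc₂.support_nodup
    rw [hsup₂] at h
    simpa using h
  set r : G.Walk v₀ x := q.reverse with hrdef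
  have hrsup : r.support = q.support.reverse := SimpleGraph.Walk.support_reverse q
  have hrnd : r.support.Nodup := by rw [hrsup]; exact List.nodup_reverse.mpr hqnd
  have hrtail : r.support = v₀ :: r.support.tail := r.support_eq_cons
  have hv₀nt : v₀ ∉ r.support.tail := by
    have h := hrnd
    rw [hrtail] at h
    exact (List.nodup_cons.mp h).1
  have hdsnd_eq : d.snd = x := by
    have hdartscons : c₂.darts = ⟨(v₀, x), hxadj⟩ :: q.darts := by
      conv_lhs => rw [← hcons]
      rw [SimpleGraph.Walk.darts_cons]
    rw [hdartscons] at hd₂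
    rcases List.mem_cons.mp hd₂ with h | h
    · rw [h]
    · exfalso
      apply hv₀nt
      have h1 : v₀ ∈ q.darts.map (·.fst) := List.mem_map_of_mem h
      rw [SimpleGraph.Walk.map_fst_darts] at h1
      rw [hrsup, List.tail_reverse]
      exact List.mem_reverse.mpr h1
  have hxCV : x ∉ CV := hdsnd_eq ▸ hdsnd
  have hxs : x ∈ ((Yhat ∪ Ystar)ᶜ : Set V) := hs₂ x (by
    rw [hsup₂]; exact List.mem_cons_of_mem _ q.start_mem_support)
  have hv₀s : v₀ ∈ ((Yhat ∪ Ystar)ᶜ : Set V) := hs₂ v₀ c₂.start_mem_support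
  have hv₀CV : v₀ ∈ CV := hdfst
  have hsr : ∀ w ∈ r.support, w ∈ ((Yhat ∪ Ystar)ᶜ : Set V) := by
    intro w hw
    rw [hrsup, List.mem_reverse] at hw
    exact hs₂ w (by rw [hsup₂]; exact List.mem_cons_of_mem _ hw)
  have hA : ∀ w, w ∈ ((Yhat ∪ Ystar)ᶜ : Set V) → w ∈ CV → w ∈ CV \ Ystar :=
    fun w hws hwCV => ⟨hwCV, (hsY w hws).2⟩
  obtain ⟨w, y, hws, hwCV, hys, hyCV, hadjwy, hreach, hdisj⟩ :=
    crossing_claim hA r hsr hv₀CV hxCV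
  have hv₀A : v₀ ∈ CV \ Ystar := ⟨hv₀CV, (hsY v₀ hv₀s).2⟩
  have hwA : w ∈ CV \ Ystar := ⟨hwCV, (hsY w hws).2⟩
  have hTv : v₀ ∈ TVerts G CV (X \ Yhat) :=
    factT v₀ x hv₀s hv₀CV hxCV (hsY x hxs).1 hxadj
  have hTw : w ∈ TVerts G CV (X \ Yhat) :=
    factT w y hws hwCV hyCV (hsY y hys).1 hadjwy
  have heq : v₀ = w := hT v₀ w hv₀A hwA hTv hTw (hreach hv₀A hwA)
  rcases hdisj with ⟨hw_eq, hy_eq⟩ | hwt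
  · -- `w = v₀` and `y = r.getVert 1`; show `x ≠ y` and derive `v₀ ∈ SVerts`
    have hxy : x ≠ y := by
      intro hxy
      have h1 : r.getVert 1 = x := by rw [← hy_eq]; exact hxy.symm
      have hlen₂ : 3 ≤ c₂.length := hc₂.three_le_length
      have hqlen : q.length + 1 = c₂.length := SimpleGraph.Walk.length_tail_add_one hnil
      have hrlen : r.length = q.length := SimpleGraph.Walk.length_reverse q
      have hrnil : ¬ r.Nil := SimpleGraph.Walk.not_nil_iff_lt_length.mpr (by omega)
      have hradj : G.Adj v₀ (r.getVert 1) := r.adj_snd hrnil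
      have hrcons : SimpleGraph.Walk.cons hradj r.tail = r :=
        SimpleGraph.Walk.cons_tail_eq r hrnil
      have hrsupp2 : r.support = v₀ :: r.tail.support := by
        conv_lhs => rw [← hrcons]
        rw [SimpleGraph.Walk.support_cons]
      have hrtnd : r.tail.support.Nodup := by
        have h := hrnd
        rw [hrsupp2] at h
        exact (List.nodup_cons.mp h).2
      have hrtlen : r.tail.length + 1 = r.length := SimpleGraph.Walk.length_tail_add_one hrnil
      have hrtnil : ¬ r.tail.Nil := SimpleGraph.Walk.not_nil_iff_lt_length.mpr (by omega)
      have hx_tail : x ∈ r.tail.support.tail := by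
        rw [← SimpleGraph.Walk.support_tail_of_not_nil r.tail hrtnil]
        exact r.tail.tail.end_mem_support
      have hhead : r.tail.support = r.getVert 1 :: r.tail.support.tail :=
        r.tail.support_eq_cons
      have key : ∀ l : List V, l.Nodup → l = r.getVert 1 :: l.tail → x ∈ l.tail → False := by
        intro l hnd hl hx
        rw [h1] at hl
        rw [hl] at hnd
        exact (List.nodup_cons.mp hnd).1 hx
      exact key _ hrtnd hhead hx_tail
    have hxX : x ∈ X \ Yhat := ⟨factX v₀ x hv₀CV hxCV hxadj, (hsY x hxs).1⟩
    rw [hw_eq] at hadjwy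
    have hyX : y ∈ X \ Yhat := ⟨factX v₀ y hv₀CV hyCV hadjwy, (hsY y hys).1⟩
    have h2 : 2 ≤ (G.neighborSet v₀ ∩ (X \ Yhat)).ncard := by
      have h1lt : 1 < (G.neighborSet v₀ ∩ (X \ Yhat)).ncard :=
        (Set.one_lt_ncard_iff (Set.toFinite _)).mpr
          ⟨x, y, ⟨hxadj, hxX⟩, ⟨hadjwy, hyX⟩, hxy⟩
      omega
    exact (hsY v₀ hv₀s).2 (hS ⟨hv₀CV, h2⟩)
  · rw [← heq] at hwt
    exact hv₀nt hwt
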